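/- Let X be a functionally Hausdorff zero-dimensional space (or more generally assume below Y is path-connected), and let Y be a topological space containing two nonempty open sets W₀, W₁ with disjoint closures. If X contains an injective sequence (x_n) that F-converges to a point x_∞ ∈ X for some meager filter F on ω, then the function space C_p(X, Y) of continuous functions with the topology of pointwise convergence is meager (of the first Baire category) in itself. -/

import Mathlib

open Set Filter Topology

/-- Bump/path interpolation in a metric space with path-connected target:
given finitely many `r`-separated points, we can find a continuous function taking
prescribed values at these points and the base value `y₀` far from them. -/
lemma interp_aux {M Y : Type*} [MetricSpace M] [TopologicalSpace Y] [PathConnectedSpace Y]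
    (y₀ : Y) (s : Finset M) (v : M → Y) {r : ℝ} (hr : 0 < r)
    (hsep : ∀ a ∈ s, ∀ b ∈ s, a ≠ b → 2 * r < dist a b) :
    ∃ G : M → Y, Continuous G ∧ (∀ a ∈ s, G a = v a) ∧
      ∀ z : M, (∀ a ∈ s, r ≤ dist z a) → G z = y₀ := by
  classical
  induction s using Finset.induction_on with
  | empty => exact ⟨fun _ => y₀, continuous_const, by simp, fun _ _ => rfl⟩
  | @insert a s ha ih =>
    obtain ⟨G', hG'c, hG'v, hG'out⟩ := ih (fun b hb c hc hbc =>
      hsep b (Finset.mem_insert_of_mem hb) c (Finset.mem_insert_of_mem hc) hbc)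
    obtain ⟨γ⟩ : Joined y₀ (v a) := PathConnectedSpace.joined y₀ (v a)
    set η : ℝ → Y := ⇑γ.extend with hη
    have hη0 : ∀ t : ℝ, t ≤ 0 → η t = y₀ := fun t ht => γ.extend_of_le_zero ht
    have hη1 : η 1 = v a := γ.extend_one
    set G : M → Y :=
      (Metric.closedBall a r).piecewise (fun z => η (1 - dist z a / r)) G' with hG
    have hfar : ∀ z : M, dist z a = r → ∀ b ∈ s, r ≤ dist z b := by
      intro z hz b hb
      have hab : 2 * r < dist a b := hsep a (Finset.mem_insert_self a s) b
        (Finset.mem_insert_of_mem hb) (fun h => ha (h ▸ hb))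
      have := dist_triangle a z b
      rw [dist_comm a z, hz] at this
      linarith
    have hGc : Continuous G := by
      apply Continuous.piecewise
      · intro z hz
        have hcl : z ∈ Metric.closedBall a r :=
          (IsClosed.frontier_subset Metric.isClosed_closedBall) hz
        have hnb : z ∉ Metric.ball a r := fun h =>
          hz.2 (Metric.ball_subset_interior_closedBall h)
        have hd : dist z a = r := le_antisymm hcl (not_lt.1 (by simpa [Metric.mem_ball] using hnb))
        have : (1 : ℝ) - dist z a / r = 0 := by
          rw [hd, div_self hr.ne']; ring
        rw [this, hη0 0 le_rfl, hG'out z (hfar z hd)]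
      · exact γ.continuous_extend.comp (by continuity)
      · exact hG'c
    refine ⟨G, hGc, ?_, ?_⟩
    · intro b hb
      rcases Finset.mem_insert.1 hb with rfl | hbs
      · have hmem : b ∈ Metric.closedBall b r := Metric.mem_closedBall_self hr.le
        rw [hG, Set.piecewise_eq_of_mem _ _ _ hmem]
        simp only [dist_self, zero_div, sub_zero, hη1]
      · have hnmem : b ∉ Metric.closedBall a r := by
          intro h
          have hab : 2 * r < dist a b := hsep a (Finset.mem_insert_self a s) b
            (Finset.mem_insert_of_mem hbs) (fun hh => ha (hh ▸ hbs))
          rw [Metric.mem_closedBall, dist_comm] at h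
          linarith
        rw [hG, Set.piecewise_eq_of_notMem _ _ _ hnmem]
        exact hG'v b hbs
    · intro z hz
      by_cases hmem : z ∈ Metric.closedBall a r
      · have hd : dist z a = r :=
          le_antisymm hmem (hz a (Finset.mem_insert_self a s))
        rw [hG, Set.piecewise_eq_of_mem _ _ _ hmem]
        have : (1 : ℝ) - dist z a / r = 0 := by rw [hd, div_self hr.ne']; ring
        rw [this, hη0 0 le_rfl]
      · rw [hG, Set.piecewise_eq_of_notMem _ _ _ hmem]
        exact hG'out z (fun b hb => hz b (Finset.mem_insert_of_mem hb))

/-- In a metric space, any function on a finite set extends to a continuous function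
into a path-connected space. -/
lemma interp {M Y : Type*} [MetricSpace M] [TopologicalSpace Y] [PathConnectedSpace Y]
    (s : Finset M) (v : M → Y) :
    ∃ G : M → Y, Continuous G ∧ ∀ a ∈ s, G a = v a := by
  classical
  have hY : Nonempty Y := PathConnectedSpace.nonempty
  obtain ⟨y₀⟩ := hY
  by_cases h : s.offDiag.Nonempty
  · set d : ℝ := s.offDiag.inf' h (fun p => dist p.1 p.2) with hd
    have hdpos : 0 < d := by
      rw [hd, Finset.lt_inf'_iff]
      intro p hp
      exact dist_pos.2 (Finset.mem_offDiag.1 hp).2.2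
    have hsep : ∀ a ∈ s, ∀ b ∈ s, a ≠ b → 2 * (d / 3) < dist a b := by
      intro a ha b hb hab
      have hmem : (a, b) ∈ s.offDiag := Finset.mem_offDiag.2 ⟨ha, hb, hab⟩
      have h1 : d ≤ dist a b :=
        Finset.inf'_le (fun p : M × M => dist p.1 p.2) hmem
      linarith
    obtain ⟨G, hGc, hGv, -⟩ := interp_aux y₀ s v (by positivity : (0:ℝ) < d / 3) hsep
    exact ⟨G, hGc, hGv⟩
  · have hsep : ∀ a ∈ s, ∀ b ∈ s, a ≠ b → 2 * (1:ℝ) < dist a b := by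
      intro a ha b hb hab
      exact absurd ⟨(a, b), Finset.mem_offDiag.2 ⟨ha, hb, hab⟩⟩ h
    obtain ⟨G, hGc, hGv, -⟩ := interp_aux y₀ s v one_pos hsep
    exact ⟨G, hGc, hGv⟩

/-- Key extension lemma: modify a continuous function to take the constant value `w`
on a finite set `S`, keeping its values on a finite set `T` disjoint from `S`. -/
lemma keyExt {X Y : Type*} [TopologicalSpace X] [TopologicalSpace Y]
    (hfH : ∀ x y : X, x ≠ y → ∃ f : X → ℝ, Continuous f ∧ f x ≠ f y)
    (hdich : TopologicalSpace.IsTopologicalBasis {s : Set X | IsClopen s} ∨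
      PathConnectedSpace Y)
    (f : X → Y) (hf : Continuous f) (T S : Finset X) (hTS : ∀ a ∈ S, a ∉ T) (w : Y) :
    ∃ g : X → Y, Continuous g ∧ (∀ a ∈ T, g a = f a) ∧ ∀ a ∈ S, g a = w := by
  classical
  set fs : X → X → X → ℝ := fun a b => if h : a ≠ b then (hfH a b h).choose else fun _ => 0
    with hfs
  have fs_cont : ∀ a b, Continuous (fs a b) := by
    intro a b
    rw [hfs]
    by_cases h : a ≠ b
    · simpa [dif_pos h] using (hfH a b h).choose_spec.1
    · simp [dif_neg h]
      exact continuous_const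
  have fs_ne : ∀ a b, a ≠ b → fs a b a ≠ fs a b b := by
    intro a b h
    rw [hfs]
    simpa [dif_pos h] using (hfH a b h).choose_spec.2
  rcases hdich with hzd | hpc
  · -- zero-dimensional case
    have hO : ∀ a ∈ S, ∃ c : Set X, IsClopen c ∧ a ∈ c ∧ ∀ b ∈ T, b ∉ c := by
      intro a ha
      set O : Set X := ⋂ b ∈ T, (fs a b) ⁻¹' ({fs a b b}ᶜ) with hOdef
      have hOopen : IsOpen O :=
        isOpen_biInter_finset fun b _ => (isOpen_compl_singleton).preimage (fs_cont a b)
      have haO : a ∈ O := by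
        rw [hOdef]
        refine Set.mem_iInter₂.2 fun b hb => ?_
        exact fs_ne a b (fun h => hTS a ha (h ▸ hb))
      obtain ⟨c, hc, hac, hcO⟩ := hzd.exists_subset_of_mem_open haO hOopen
      refine ⟨c, hc, hac, fun b hb hbc => ?_⟩
      have := hcO hbc
      rw [hOdef] at this
      exact (Set.mem_iInter₂.1 this b hb) rfl
    choose! C hC1 hC2 hC3 using hO
    set U : Set X := ⋃ a ∈ S, C a with hU
    have hUclopen : IsClopen U := isClopen_biUnion_finset hC1
    set g : X → Y := U.piecewise (fun _ => w) f with hg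
    refine ⟨g, ?_, ?_, ?_⟩
    · refine Continuous.piecewise ?_ continuous_const hf
      intro z hz
      rw [hUclopen.frontier_eq] at hz
      exact absurd hz (Set.notMem_empty z)
    · intro b hb
      have hbU : b ∉ U := by
        rw [hU]
        simp only [Set.mem_iUnion, not_exists]
        intro a ha
        exact hC3 a ha b hb
      rw [hg, Set.piecewise_eq_of_notMem _ _ _ hbU]
    · intro a ha
      have haU : a ∈ U := Set.mem_biUnion ha (hC2 a ha)
      rw [hg, Set.piecewise_eq_of_mem _ _ _ haU]
  · -- path-connected case
    haveI := hpc
    set ι := {a : X // a ∈ S ∪ T} with hι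
    set Φ : X → (ι × ι → ℝ) := fun z p => fs p.1.1 p.2.1 z with hΦ
    have hΦc : Continuous Φ := continuous_pi fun p => fs_cont _ _
    have hΦinj : ∀ a ∈ S ∪ T, ∀ b ∈ S ∪ T, Φ a = Φ b → a = b := by
      intro a ha b hb h
      by_contra hne
      exact fs_ne a b hne (congrFun h (⟨a, ha⟩, ⟨b, hb⟩))
    set u : X → Y := fun a => if a ∈ S then w else f a with hu
    set v : ((ι × ι) → ℝ) → Y :=
      fun m => if h : ∃ a, a ∈ S ∪ T ∧ Φ a = m then u h.choose else w with hv
    have hvΦ : ∀ a ∈ S ∪ T, v (Φ a) = u a := by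
      intro a ha
      have h : ∃ b, b ∈ S ∪ T ∧ Φ b = Φ a := ⟨a, ha, rfl⟩
      rw [hv]
      simp only [dif_pos h]
      rw [hΦinj _ h.choose_spec.1 _ ha h.choose_spec.2]
    obtain ⟨G, hGc, hGv⟩ := interp ((S ∪ T).image Φ) v
    refine ⟨G ∘ Φ, hGc.comp hΦc, ?_, ?_⟩
    · intro a haT
      have haST : a ∈ S ∪ T := Finset.mem_union_right _ haT
      have : G (Φ a) = v (Φ a) := hGv (Φ a) (Finset.mem_image_of_mem _ haST)
      rw [Function.comp_apply, this, hvΦ a haST, hu]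
      simp only [if_neg (fun h => hTS a h haT)]
    · intro a haS
      have haST : a ∈ S ∪ T := Finset.mem_union_left _ haS
      have : G (Φ a) = v (Φ a) := hGv (Φ a) (Finset.mem_image_of_mem _ haST)
      rw [Function.comp_apply, this, hvΦ a haST, hu]
      simp only [if_pos haS]

/-- if `X` is functionally Hausdorff and zero-dimensional (or `Y` is
path-connected), `Y` has two nonempty open sets with disjoint closures, and `X` contains
an injective sequence `F`-converging to some point for a meager filter `F` on `ω`
(meager = `ξ(F) = Fr` for a finite-to-one surjection `ξ`, by Talagrand), then
`C_p(X, Y)` — the continuous functions with the topology of pointwise convergence — is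
meager in itself. -/
theorem stmt12 {X Y : Type*} [TopologicalSpace X] [TopologicalSpace Y]
    (hfH : ∀ x y : X, x ≠ y → ∃ f : X → ℝ, Continuous f ∧ f x ≠ f y)
    (hdichotomy : TopologicalSpace.IsTopologicalBasis {s : Set X | IsClopen s} ∨
      PathConnectedSpace Y)
    (W₀ W₁ : Set Y) (hW₀ : IsOpen W₀) (hW₁ : IsOpen W₁)
    (hW₀ne : W₀.Nonempty) (hW₁ne : W₁.Nonempty)
    (hWdisj : Disjoint (closure W₀) (closure W₁))
    (x : ℕ → X) (hinj : Function.Injective x) (xlim : X)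
    (F : Filter ℕ)
    (hmeager : ∃ ξ : ℕ → ℕ, Function.Surjective ξ ∧ (∀ n, (ξ ⁻¹' {n}).Finite) ∧
      Filter.map ξ F = Filter.cofinite)
    (hconv : Filter.Tendsto x F (𝓝 xlim)) :
    IsMeagre (Set.univ : Set {f : X → Y // Continuous f}) := by
  classical
  obtain ⟨ξ, hξsurj, hξfin, hξmap⟩ := hmeager
  set Cp := {f : X → Y // Continuous f} with hCp
  set W : Bool → Set Y := fun b => cond b W₁ W₀ with hW
  have hWopen : ∀ b, IsOpen (W b) := by rintro (_ | _) <;> simpa [hW]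
  have hWne : ∀ b, (W b).Nonempty := by rintro (_ | _) <;> simpa [hW]
  set E : ℕ → Bool → Set Cp :=
    fun m i => {f | ∀ n, m ≤ n → ∃ k, ξ k = n ∧ f.1 (x k) ∉ W i} with hE
  -- each E m i is closed
  have hEclosed : ∀ m i, IsClosed (E m i) := by
    intro m i
    have : E m i = ⋂ n ∈ {n : ℕ | m ≤ n}, {f : Cp | ∃ k, ξ k = n ∧ f.1 (x k) ∉ W i} := by
      ext f
      simp [hE]
    rw [this]
    refine isClosed_biInter fun n _ => ?_
    rw [← isOpen_compl_iff]
    have hcompl : {f : Cp | ∃ k, ξ k = n ∧ f.1 (x k) ∉ W i}ᶜ =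
        ⋂ k ∈ ξ ⁻¹' {n}, (fun f : Cp => f.1 (x k)) ⁻¹' (W i) := by
      ext f
      simp only [Set.mem_compl_iff, Set.mem_setOf_eq, not_exists, Set.mem_iInter,
        Set.mem_preimage, Set.mem_singleton_iff]
      constructor
      · intro h k hk
        by_contra hne
        exact h k ⟨hk, hne⟩
      · rintro h k ⟨hk, hne⟩
        exact hne (h k hk)
    rw [hcompl]
    exact (hξfin n).isOpen_biInter fun k _ =>
      (hWopen i).preimage ((continuous_apply (x k)).comp continuous_subtype_val)
  -- each E m i has dense complement
  have hEdense : ∀ m i, Dense (E m i)ᶜ := by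
    intro m i
    rw [dense_iff_inter_open]
    intro U hU hUne
    obtain ⟨f, hfU⟩ := hUne
    obtain ⟨V, hV, hVU⟩ := isOpen_induced_iff.1 hU
    have hfV : f.1 ∈ V := by rw [← hVU] at hfU; exact hfU
    obtain ⟨I, u, hu, hsub⟩ := isOpen_pi_iff.1 hV f.1 hfV
    -- choose a level n avoiding the finitely many constrained points and with m ≤ n
    have hBfin : (x ⁻¹' (I : Set X)).Finite :=
      (I.finite_toSet.preimage (hinj.injOn))
    have hfin : ((ξ '' (x ⁻¹' (I : Set X))) ∪ {j | j < m}).Finite :=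
      (hBfin.image ξ).union (Set.finite_Iio m)
    obtain ⟨n, hn⟩ := hfin.infinite_compl.nonempty
    simp only [Set.mem_compl_iff, Set.mem_union, not_or, Set.mem_setOf_eq, not_lt] at hn
    obtain ⟨hn1, hn2⟩ := hn
    have hxknotI : ∀ k, ξ k = n → x k ∉ (I : Set X) := by
      intro k hk hmem
      exact hn1 ⟨k, hmem, hk⟩
    -- the finite set where we force the value into W i
    set S : Finset X := Finset.image x (hξfin n).toFinset with hS
    have hTS : ∀ a ∈ S, a ∉ I := by
      intro a ha
      obtain ⟨k, hk, rfl⟩ := Finset.mem_image.1 ha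
      rw [Set.Finite.mem_toFinset] at hk
      intro haI
      exact hxknotI k hk haI
    obtain ⟨w, hw⟩ := hWne i
    obtain ⟨g, hgc, hgT, hgS⟩ := keyExt hfH hdichotomy f.1 f.2 I S hTS w
    refine ⟨⟨g, hgc⟩, ?_, ?_⟩
    · rw [← hVU]
      apply hsub
      intro a ha
      show g a ∈ u a
      rw [hgT a ha]
      exact (hu a ha).2
    · simp only [Set.mem_compl_iff, hE, Set.mem_setOf_eq, not_forall]
      refine ⟨n, hn2, ?_⟩
      rintro ⟨k, hk, hnot⟩
      apply hnot
      have hxkS : x k ∈ S := by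
        rw [hS]
        exact Finset.mem_image_of_mem x ((hξfin n).mem_toFinset.2 hk)
      rw [hgS (x k) hxkS]
      exact hw
  have hEnd : ∀ m i, IsMeagre (E m i) := by
    intro m i
    rw [IsMeagre]
    exact residual_of_dense_open (hEclosed m i).isOpen_compl (hEdense m i)
  -- the union covers everything
  have hcover : (Set.univ : Set Cp) ⊆ ⋃ m, (E m false ∪ E m true) := by
    intro f _
    have hnotboth : ¬(f.1 xlim ∈ closure W₀ ∧ f.1 xlim ∈ closure W₁) := by
      rintro ⟨h0, h1⟩
      exact (Set.disjoint_left.1 hWdisj h0) h1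
    have hcase : ∃ i : Bool, f.1 xlim ∉ closure (W i) := by
      by_cases h0 : f.1 xlim ∈ closure W₀
      · exact ⟨true, fun h => hnotboth ⟨h0, h⟩⟩
      · exact ⟨false, h0⟩
    obtain ⟨i, hi⟩ := hcase
    have hopen : IsOpen (f.1 ⁻¹' (closure (W i))ᶜ) :=
      (isClosed_closure.isOpen_compl).preimage f.2
    have hmemnhds : f.1 ⁻¹' (closure (W i))ᶜ ∈ 𝓝 xlim := hopen.mem_nhds hi
    have hA : x ⁻¹' (f.1 ⁻¹' (closure (W i))ᶜ) ∈ F := hconv hmemnhds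
    set A := x ⁻¹' (f.1 ⁻¹' (closure (W i))ᶜ) with hAdef
    have himg : ξ '' A ∈ Filter.map ξ F :=
      Filter.mem_map.2 (Filter.mem_of_superset hA (Set.subset_preimage_image ξ A))
    rw [hξmap, Filter.mem_cofinite] at himg
    set m := (himg.toFinset.sup id) + 1 with hm
    have hmA : ∀ n, m ≤ n → n ∈ ξ '' A := by
      intro n hn
      by_contra hc
      have : n ∈ himg.toFinset := himg.mem_toFinset.2 hc
      have := Finset.le_sup (f := id) this
      simp only [id_eq] at this
      omega
    refine Set.mem_iUnion.2 ⟨m, ?_⟩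
    have hfE : f ∈ E m i := by
      intro n hn
      obtain ⟨k, hkA, hkn⟩ := hmA n hn
      refine ⟨k, hkn, fun hmem => ?_⟩
      exact hkA (subset_closure hmem)
    cases i
    · exact Set.mem_union_left _ hfE
    · exact Set.mem_union_right _ hfE
  have hmeagre_union : IsMeagre (⋃ m, (E m false ∪ E m true)) := by
    apply isMeagre_iUnion
    intro m
    have h1 := hEnd m false
    have h2 := hEnd m true
    rw [IsMeagre, Set.compl_union]
    exact Filter.inter_mem h1 h2
  exact hmeagre_union.mono hcover
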